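/- If P is a finite bounded interval order with more than one atom, then there exists an atom a of P such that every cover of a is greater than some atom other than a. -/
import Mathlib


/-- A poset is `(2+2)`-free (an interval order) if it contains no induced subposet
isomorphic to the disjoint union of two 2-element chains. -/
def TwoPlusTwoFree (P : Type*) [Preorder P] : Prop :=
  ¬ ∃ a b c d : P, a < b ∧ c < d ∧
    ¬ a ≤ c ∧ ¬ c ≤ a ∧ ¬ a ≤ d ∧ ¬ d ≤ a ∧ ¬ b ≤ c ∧ ¬ c ≤ b ∧ ¬ b ≤ d ∧ ¬ d ≤ b

private lemma below_bad_cover {P : Type*} [Fintype P] [PartialOrder P] [BoundedOrder P]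
    {a c : P} (ha : IsAtom a) (hac : a ⋖ c)
    (hc : ∀ a', IsAtom a' → a' ≠ a → ¬ a' < c) :
    ∀ x, x < c → x = ⊥ ∨ x = a := by
  intro x hx
  rcases eq_or_ne x ⊥ with hb | hb
  · exact Or.inl hb
  · obtain ⟨a', ha', hle⟩ := (IsAtomic.eq_bot_or_exists_atom_le x).resolve_left hb
    have haa : a' = a := by
      by_contra hne
      exact hc a' ha' hne (lt_of_le_of_lt hle hx)
    subst haa
    rcases lt_or_eq_of_le hle with hlt | heq
    · exact absurd hx (hac.2 hlt)
    · exact Or.inr heq.symm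

/-- In a finite bounded interval order with more than one atom, there is an atom `a` such that
every cover of `a` is greater than some atom other than `a`. -/
theorem stmt15 {P : Type*} [Fintype P] [PartialOrder P] [BoundedOrder P]
    (h : TwoPlusTwoFree P)
    (hatoms : ∃ a b : P, IsAtom a ∧ IsAtom b ∧ a ≠ b) :
    ∃ a : P, IsAtom a ∧ ∀ c : P, a ⋖ c → ∃ a' : P, IsAtom a' ∧ a' ≠ a ∧ a' < c := by
  by_contra hcon
  push_neg at hcon
  obtain ⟨a, b, ha, hb, hab⟩ := hatoms
  obtain ⟨c, hac, hc⟩ := hcon a ha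
  obtain ⟨d, hbd, hd⟩ := hcon b hb
  have keyc := below_bad_cover ha hac hc
  have keyd := below_bad_cover hb hbd hd
  -- atoms are incomparable
  have hnab : ¬ a ≤ b := fun hle => by
    rcases lt_or_eq_of_le hle with hlt | heq
    · exact ha.1 (hb.2 a hlt)
    · exact hab heq
  have hnba : ¬ b ≤ a := fun hle => by
    rcases lt_or_eq_of_le hle with hlt | heq
    · exact hb.1 (ha.2 b hlt)
    · exact hab heq.symm
  have hnad : ¬ a ≤ d := fun hle => by
    rcases lt_or_eq_of_le hle with hlt | heq
    · rcases keyd a hlt with h1 | h1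
      · exact ha.1 h1
      · exact hab h1
    · subst heq; exact hb.1 (ha.2 b hbd.lt)
  have hnda : ¬ d ≤ a := fun hle => hb.1 (ha.2 b (lt_of_lt_of_le hbd.lt hle))
  have hncb : ¬ c ≤ b := fun hle => ha.1 (hb.2 a (lt_of_lt_of_le hac.lt hle))
  have hnbc : ¬ b ≤ c := fun hle => by
    rcases lt_or_eq_of_le hle with hlt | heq
    · rcases keyc b hlt with h1 | h1
      · exact hb.1 h1
      · exact hab h1.symm
    · subst heq; exact ha.1 (hb.2 a hac.lt)
  have hncd : ¬ c ≤ d := fun hle => by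
    rcases lt_or_eq_of_le hle with hlt | heq
    · rcases keyd c hlt with h1 | h1
      · exact absurd hac.lt (h1 ▸ not_lt_bot)
      · exact hnab (h1 ▸ hac.lt).le
    · subst heq; exact hnad hac.lt.le
  have hndc : ¬ d ≤ c := fun hle => by
    rcases lt_or_eq_of_le hle with hlt | heq
    · rcases keyc d hlt with h1 | h1
      · exact absurd hbd.lt (h1 ▸ not_lt_bot)
      · exact hnba (h1 ▸ hbd.lt).le
    · subst heq; exact hnbc hbd.lt.le
  exact h ⟨a, c, b, d, hac.lt, hbd.lt, hnab, hnba, hnad, hnda, hncb, hnbc, hncd, hndc⟩
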